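/- arXiv:2306.05818 — 3 statements merged into one kernel-verified Lean document; each statement's English description precedes it below -/
import Mathlib

section
/- Let f : ℝ → ℝ be continuous on [0,1] and not affine linear on [0,1]. Then there exist rationals c, d with 0 ≤ c < d ≤ 1 such that f((c+d)/2) ≠ (f(c)+f(d))/2. -/
theorem stmt_3 (f : ℝ → ℝ)
    (hcont : ContinuousOn f (Set.Icc (0:ℝ) 1))
    (hnl : ¬ ∃ α β : ℝ, ∀ x ∈ Set.Icc (0:ℝ) 1, f x = α * x + β) :
    ∃ c d : ℚ, (0:ℝ) ≤ (c:ℝ) ∧ (c:ℝ) < d ∧ (d:ℝ) ≤ 1 ∧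
      f (((c:ℝ) + d) / 2) ≠ (f c + f d) / 2 := by
  by_contra hcontra
  push_neg at hcontra
  apply hnl
  refine ⟨f 1 - f 0, f 0, ?_⟩
  set α := f 1 - f 0 with hα
  set β := f 0 with hβ
  have key : ∀ n k : ℕ, k ≤ 2^n → f ((k:ℝ)/2^n) = α * ((k:ℝ)/2^n) + β := by
    intro n
    induction n with
    | zero =>
      intro k hk
      interval_cases k
      · simp [hβ]
      · norm_num [hα, hβ]
    | succ n ih =>
      intro k hk
      have h2n : (2:ℕ)^(n+1) = 2 * 2^n := by ring
      rcases Nat.even_or_odd k with ⟨m, hm⟩ | ⟨m, hm⟩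
      · subst hm
        have hm2 : m ≤ 2^n := by omega
        have heq : ((m+m : ℕ):ℝ)/2^(n+1) = (m:ℝ)/2^n := by push_cast; ring
        rw [heq]; exact ih m hm2
      · subst hm
        have hm1 : m + 1 ≤ 2^n := by omega
        have hp : (0:ℝ) < 2^n := by positivity
        have hcast1 : (((m:ℚ)/2^n : ℚ) : ℝ) = (m:ℝ)/2^n := by push_cast; ring
        have hcast2 : ((((m:ℚ)+1)/2^n : ℚ) : ℝ) = ((m:ℝ)+1)/2^n := by push_cast; ring
        have h1 : (0:ℝ) ≤ (((m:ℚ)/2^n : ℚ) : ℝ) := by rw [hcast1]; positivity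
        have h2 : (((m:ℚ)/2^n : ℚ) : ℝ) < ((((m:ℚ)+1)/2^n : ℚ) : ℝ) := by
          rw [hcast1, hcast2, div_lt_div_iff₀ hp hp]; nlinarith
        have h3 : ((((m:ℚ)+1)/2^n : ℚ) : ℝ) ≤ 1 := by
          rw [hcast2, div_le_one hp]
          have : ((m:ℝ)+1) ≤ (2:ℝ)^n := by exact_mod_cast hm1
          linarith
        have hmid := hcontra _ _ h1 h2 h3
        have heq2 : ((((m:ℚ)/2^n : ℚ) : ℝ) + ((((m:ℚ)+1)/2^n : ℚ) : ℝ))/2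
            = ((2*m+1:ℕ):ℝ)/2^(n+1) := by
          rw [hcast1, hcast2]; push_cast; ring
        rw [heq2] at hmid
        have hcast3 : ((m:ℝ)+1)/2^n = ((m+1:ℕ):ℝ)/2^n := by push_cast; ring
        rw [hmid, hcast1, hcast2, hcast3, ih m (by omega), ih (m+1) hm1]
        push_cast
        ring
  intro x hx
  obtain ⟨hx0, hx1⟩ := hx
  set u : ℕ → ℝ := fun n => ((⌊x * 2^n⌋₊ : ℕ) : ℝ)/2^n with hu
  have hxn : ∀ n : ℕ, (0:ℝ) ≤ x * 2^n := by intro n; positivity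
  have hfl : ∀ n : ℕ, (⌊x * 2^n⌋₊ : ℕ) ≤ 2^n := by
    intro n
    have : x * 2^n ≤ ((2^n : ℕ) : ℝ) := by push_cast; nlinarith [pow_pos (by norm_num : (0:ℝ) < 2) n]
    calc ⌊x * 2^n⌋₊ ≤ ⌊((2^n : ℕ) : ℝ)⌋₊ := Nat.floor_le_floor this
      _ = 2^n := Nat.floor_natCast _
  have hule : ∀ n, u n ≤ x := by
    intro n
    have h1 : ((⌊x * 2^n⌋₊ : ℕ) : ℝ) ≤ x * 2^n := Nat.floor_le (hxn n)
    have hp : (0:ℝ) < 2^n := by positivity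
    rw [hu]; simp only
    rw [div_le_iff₀ hp]
    linarith
  have hgt : ∀ n : ℕ, x - (1/2)^n ≤ u n := by
    intro n
    have h1 : x * 2^n < (⌊x * 2^n⌋₊ : ℝ) + 1 := Nat.lt_floor_add_one _
    have hp : (0:ℝ) < 2^n := by positivity
    rw [hu]; simp only
    rw [le_div_iff₀ hp]
    have : (1/2:ℝ)^n * 2^n = 1 := by
      rw [← mul_pow]; norm_num
    nlinarith
  have hmem : ∀ n, u n ∈ Set.Icc (0:ℝ) 1 := by
    intro n
    refine ⟨by positivity, le_trans (hule n) hx1⟩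
  have htend : Filter.Tendsto u Filter.atTop (nhds x) := by
    apply tendsto_of_tendsto_of_tendsto_of_le_of_le
      (g := fun n => x - (1/2:ℝ)^n) (h := fun _ => x)
    · have : Filter.Tendsto (fun n : ℕ => (1/2:ℝ)^n) Filter.atTop (nhds 0) :=
        tendsto_pow_atTop_nhds_zero_of_lt_one (by norm_num) (by norm_num)
      have := (tendsto_const_nhds (x := x)).sub this
      simpa using this
    · exact tendsto_const_nhds
    · exact hgt
    · exact hule
  have htendW : Filter.Tendsto u Filter.atTop (nhdsWithin x (Set.Icc (0:ℝ) 1)) :=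
    tendsto_nhdsWithin_of_tendsto_nhds_of_eventually_within _ htend
      (Filter.Eventually.of_forall hmem)
  have h1 : Filter.Tendsto (fun n => f (u n)) Filter.atTop (nhds (f x)) :=
    (hcont x ⟨hx0, hx1⟩).tendsto.comp htendW
  have h2 : Filter.Tendsto (fun n => f (u n)) Filter.atTop (nhds (α * x + β)) := by
    have heq : ∀ n, f (u n) = α * u n + β := fun n => key n _ (hfl n)
    simp only [heq]
    exact ((tendsto_const_nhds.mul htend).add tendsto_const_nhds)
  exact tendsto_nhds_unique h1 h2
end

section
/- For all real a, b, c, d ≥ 0 with a·b = 0 and c·d = 0, there exists ε ≥ 0 such that e := a·c + b·d − ε ≥ 0 and f := a·d + b·c − ε ≥ 0 satisfy e·f = 0 and e − f = (a − b)·(c − d). -/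
theorem stmt_14 (a b c d : ℝ) (ha : 0 ≤ a) (hb : 0 ≤ b) (hc : 0 ≤ c) (hd : 0 ≤ d)
    (hab : a * b = 0) (hcd : c * d = 0) :
    ∃ ε : ℝ, 0 ≤ ε ∧
      0 ≤ a * c + b * d - ε ∧ 0 ≤ a * d + b * c - ε ∧
      (a * c + b * d - ε) * (a * d + b * c - ε) = 0 ∧
      (a * c + b * d - ε) - (a * d + b * c - ε) = (a - b) * (c - d) := by
  rcases mul_eq_zero.mp hab with h | h <;> rcases mul_eq_zero.mp hcd with h' | h' <;>
    subst h <;> subst h' <;> refine ⟨0, le_refl 0, ?_, ?_, ?_, ?_⟩ <;>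
    simp <;> positivity
end

section
/- Let p be a monic real polynomial of degree n ≥ 2. Then the linear span over ℝ of the set {p(x+k) : k ∈ ℕ} ∪ {1, x} inside ℝ[x] contains x²; in fact it equals the span of {1, x, x², ..., xⁿ}. -/
open Polynomial

lemma aux1 (m : ℕ) : ((X + 1 : ℝ[X])^m - X^m) = ∑ k ∈ Finset.range m, C (m.choose k : ℝ) * X^k := by
  have := add_pow (X : ℝ[X]) 1 m
  simp only [one_pow, mul_one] at this
  rw [this, Finset.sum_range_succ]
  simp [mul_comm]

lemma aux2 (m j : ℕ) : ((X + 1 : ℝ[X])^m - X^m).coeff j = if j < m then (m.choose j : ℝ) else 0 := by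
  rw [aux1]
  simp [coeff_C_mul, coeff_X_pow, Finset.mul_sum]

noncomputable def delta (q : ℝ[X]) : ℝ[X] := q.comp (X + 1) - q

lemma delta_eq (q : ℝ[X]) :
    delta q = ∑ m ∈ Finset.range (q.natDegree + 1), C (q.coeff m) * ((X + 1) ^ m - X ^ m) := by
  unfold delta
  conv_lhs => rw [q.as_sum_range' (q.natDegree + 1) (lt_add_one _)]
  simp [Finset.sum_comp, mul_sub, Finset.sum_sub_distrib, smul_comp, Polynomial.smul_eq_C_mul,
    ← C_mul_X_pow_eq_monomial]

lemma delta_coeff (q : ℝ[X]) (j : ℕ) :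
    (delta q).coeff j = ∑ m ∈ Finset.range (q.natDegree + 1),
      q.coeff m * (if j < m then (m.choose j : ℝ) else 0) := by
  rw [delta_eq]
  simp only [finset_sum_coeff, coeff_C_mul, aux2]

lemma delta_deg (q : ℝ[X]) (d : ℕ) (hq : q.natDegree = d + 1) :
    (delta q).natDegree ≤ d ∧ (delta q).coeff d = (d+1) * q.coeff (d+1) := by
  constructor
  · rw [natDegree_le_iff_coeff_eq_zero]
    intro j hj
    rw [delta_coeff]
    apply Finset.sum_eq_zero
    intro m hm
    rw [Finset.mem_range, hq] at hm
    have : ¬ j < m := by omega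
    simp [this]
  · rw [delta_coeff, hq, Finset.sum_range_succ]
    have h1 : ∀ m ∈ Finset.range (d+1), q.coeff m * (if d < m then (m.choose d : ℝ) else 0) = 0 := by
      intro m hm
      rw [Finset.mem_range] at hm
      have : ¬ d < m := by omega
      simp [this]
    rw [Finset.sum_eq_zero h1]
    simp [Nat.choose_succ_self_right, mul_comm]

theorem stmt_19 (n : ℕ) (hn : 2 ≤ n) (p : Polynomial ℝ)
    (hmonic : p.Monic) (hdeg : p.natDegree = n) :
    X ^ 2 ∈ Submodule.span ℝ
        (({1, X} : Set (Polynomial ℝ)) ∪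
          Set.range (fun k : ℕ => p.comp (X + C (k : ℝ)))) ∧
      Submodule.span ℝ
          (({1, X} : Set (Polynomial ℝ)) ∪
            Set.range (fun k : ℕ => p.comp (X + C (k : ℝ)))) =
        Submodule.span ℝ (Set.range (fun i : Fin (n + 1) => X ^ (i : ℕ))) := by
  set gens : Set (Polynomial ℝ) :=
    ({1, X} : Set (Polynomial ℝ)) ∪ Set.range (fun k : ℕ => p.comp (X + C (k : ℝ))) with hgens
  set S := Submodule.span ℝ gens with hS
  set T := Submodule.span ℝ (Set.range (fun k : ℕ => p.comp (X + C (k : ℝ)))) with hT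
  have hTS : T ≤ S := Submodule.span_mono Set.subset_union_right
  -- T is closed under composition with X + 1
  have hcomp : ∀ q ∈ T, q.comp (X + 1) ∈ T := by
    intro q hq
    induction hq using Submodule.span_induction with
    | mem x hx =>
      obtain ⟨k, rfl⟩ := hx
      apply Submodule.subset_span
      refine ⟨k + 1, ?_⟩
      simp only [comp_assoc, add_comp, X_comp, C_comp]
      congr 1
      push_cast
      rw [C_add, C_1]
      ring
    | zero => simp [zero_comp, Submodule.zero_mem]
    | add x y _ _ hx hy => simpa [add_comp] using Submodule.add_mem _ hx hy
    | smul a x _ hx => simpa [smul_comp] using Submodule.smul_mem _ a hx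
  -- iterated differences
  set g : ℕ → ℝ[X] := fun j => delta^[j] p with hg
  have hgT : ∀ j, g j ∈ T := by
    intro j
    induction j with
    | zero =>
      apply Submodule.subset_span
      refine ⟨0, ?_⟩
      simp [hg]
    | succ j ih =>
      have : g (j+1) = delta (g j) := by
        simp [hg, Function.iterate_succ_apply']
      rw [this]
      exact Submodule.sub_mem _ (hcomp _ ih) ih
  have hgdeg : ∀ j ≤ n, (g j).natDegree = n - j ∧ (g j).coeff (n - j) ≠ 0 := by
    intro j
    induction j with
    | zero =>
      intro _
      refine ⟨by simpa [hg] using hdeg, ?_⟩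
      simp only [Nat.sub_zero, hg, Function.iterate_zero, id]
      rw [← hdeg, ← leadingCoeff]
      simp [hmonic.leadingCoeff]
    | succ j ih =>
      intro hjn
      obtain ⟨h1, h2⟩ := ih (by omega)
      have hd : (g j).natDegree = (n - (j+1)) + 1 := by omega
      have := delta_deg (g j) (n - (j+1)) hd
      have hgs : g (j+1) = delta (g j) := by
        simp [hg, Function.iterate_succ_apply']
      have hc : (g (j+1)).coeff (n - (j+1)) ≠ 0 := by
        rw [hgs, this.2]
        have : ((n - (j+1) : ℕ) + 1 : ℝ) ≠ 0 := by positivity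
        have e : n - (j+1) + 1 = n - j := by omega
        have h2' : (g j).coeff ((n - (j+1)) + 1) ≠ 0 := by rw [e]; exact h2
        exact mul_ne_zero this h2'
      refine ⟨?_, hc⟩
      have hle : (g (j+1)).natDegree ≤ n - (j+1) := by rw [hgs]; exact this.1
      have hge : n - (j+1) ≤ (g (j+1)).natDegree := le_natDegree_of_ne_zero hc
      omega
  -- main claim: every polynomial of degree ≤ i (i ≤ n) is in S
  have key : ∀ i : ℕ, i ≤ n → ∀ q : ℝ[X], q.degree ≤ (i : WithBot ℕ) → q ∈ S := by
    intro i
    induction i with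
    | zero =>
      intro _ q hq
      have hq0 : q.degree ≤ 0 := by exact_mod_cast hq
      rw [eq_C_of_degree_le_zero hq0]
      have h1 : (1 : ℝ[X]) ∈ S := Submodule.subset_span (Or.inl (Set.mem_insert _ _))
      have : C (q.coeff 0) = q.coeff 0 • (1 : ℝ[X]) := by
        rw [smul_eq_C_mul, mul_one]
      rw [this]
      exact Submodule.smul_mem _ (q.coeff 0) h1
    | succ i ih =>
      intro hin q hq
      obtain ⟨hd1, hc1⟩ := hgdeg (n - (i+1)) (by omega)
      have hni : n - (n - (i+1)) = i + 1 := by omega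
      rw [hni] at hd1 hc1
      set G := g (n - (i+1)) with hG
      set c := G.coeff (i+1) with hcdef
      set r := q - (q.coeff (i+1) / c) • G with hr
      have hrdeg : r.degree ≤ (i : WithBot ℕ) := by
        rw [degree_le_iff_coeff_zero]
        intro m hm
        have him : i < m := by exact_mod_cast hm
        rw [hr]
        simp only [coeff_sub, coeff_smul, smul_eq_mul]
        rcases eq_or_lt_of_le (Nat.succ_le_of_lt him) with h | h
        · rw [← h, ← hcdef, div_mul_cancel₀ _ hc1, sub_self]
        · have hq0 : q.coeff m = 0 := by
            apply coeff_eq_zero_of_degree_lt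
            refine lt_of_le_of_lt hq ?_
            exact_mod_cast (by omega : i + 1 < m)
          have hG0 : G.coeff m = 0 := coeff_eq_zero_of_natDegree_lt (by omega)
          rw [hq0, hG0, mul_zero, sub_self]
      have hrS : r ∈ S := ih (by omega) r hrdeg
      have hGS : G ∈ S := hTS (hgT _)
      have : q = r + (q.coeff (i+1) / c) • G := by rw [hr]; ring
      rw [this]
      exact Submodule.add_mem _ hrS (Submodule.smul_mem _ _ hGS)
  have hX2 : (X ^ 2 : ℝ[X]) ∈ S := by
    apply key 2 hn
    rw [degree_X_pow]
  refine ⟨hX2, ?_⟩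
  set R := Submodule.span ℝ (Set.range (fun i : Fin (n + 1) => (X : ℝ[X]) ^ (i : ℕ))) with hR
  have hRmem : ∀ q : ℝ[X], q.natDegree ≤ n → q ∈ R := by
    intro q hq
    rw [q.as_sum_range' (n+1) (by omega)]
    apply Submodule.sum_mem
    intro i hi
    rw [Finset.mem_range] at hi
    have hXi : (X : ℝ[X]) ^ i ∈ R :=
      Submodule.subset_span ⟨⟨i, by omega⟩, rfl⟩
    have : (monomial i) (q.coeff i) = q.coeff i • (X : ℝ[X]) ^ i := by
      rw [smul_eq_C_mul, C_mul_X_pow_eq_monomial]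
    rw [this]
    exact Submodule.smul_mem _ _ hXi
  apply le_antisymm
  · rw [hS, Submodule.span_le]
    rintro q (hq | ⟨k, rfl⟩)
    · rcases hq with rfl | hq
      · exact hRmem 1 (by simp)
      · rw [Set.mem_singleton_iff] at hq
        subst hq
        exact hRmem X (by simp; omega)
    · apply hRmem
      rw [natDegree_comp, natDegree_X_add_C, hdeg, mul_one]
  · rw [hR, Submodule.span_le]
    rintro q ⟨i, rfl⟩
    apply key n le_rfl
    rw [degree_X_pow]
    exact_mod_cast (by omega : (i : ℕ) ≤ n)
end
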